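/- Let β = (βx, βy) ∈ (0,∞)², assume the set of saddle points Z⋆ is nonempty, and assume the smoothed gap has a quadratic error bound with constant η > 0: G_β(z') ≥ (η/2) dist(z', Z⋆)² for all z' ∈ X × Y. Then for every z = (x,y) ∈ X × Y with f(x) < +∞, the optimality gap satisfies f(x) − f⋆ ≤ (1 + 2√(βx/η)) G_β(z) + √(2 βy) ‖y‖ √(G_β(z)). -/

import Mathlib

open scoped RealInnerProductSpace
open Filter Topology Metric

noncomputable section

variable {X Y : Type*} [NormedAddCommGroup X] [InnerProductSpace ℝ X]
  [NormedAddCommGroup Y] [InnerProductSpace ℝ Y]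

/-- The Lagrangian `L(x, y) = f(x) + ⟪A x − b, y⟫`. -/
def Lag (f : X → EReal) (A : X →L[ℝ] Y) (b : Y) (x : X) (y : Y) : EReal :=
  f x + ((⟪A x - b, y⟫ : ℝ) : EReal)

/-- The smoothed duality gap `G_β((x, y); (xd, yd))`, valued in `ℝ ∪ {+∞}` (here `EReal`;
the inner expression is `−∞` exactly when `f x' = +∞`, so such `x'` do not contribute). -/
def smoothedGap (f : X → EReal) (A : X →L[ℝ] Y) (b : Y) (βx βy : ℝ)
    (x : X) (y : Y) (xd : X) (yd : Y) : EReal :=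
  ⨆ w : X × Y,
    (Lag f A b x w.2 - Lag f A b w.1 y
      - ((βx / 2 * ‖w.1 - xd‖ ^ 2 + βy / 2 * ‖w.2 - yd‖ ^ 2 : ℝ) : EReal))

/-- `f` is proper: never `−∞` and not identically `+∞`. -/
def EProper (f : X → EReal) : Prop := (∀ u, f u ≠ ⊥) ∧ ∃ u, f u ≠ ⊤

/-- Convexity for an `EReal`-valued function. -/
def EConvexOn (f : X → EReal) : Prop :=
  ∀ u v : X, ∀ t : ℝ, 0 ≤ t → t ≤ 1 →
    f (t • u + (1 - t) • v) ≤ (t : EReal) * f u + ((1 - t : ℝ) : EReal) * f v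

/-- The subdifferential `∂f(x) = {q | ∀ u, f(u) ≥ f(x) + ⟪q, u − x⟫}`. -/
def ESubdiff (f : X → EReal) (x : X) : Set X :=
  {q | ∀ u : X, f x + ((⟪q, u - x⟫ : ℝ) : EReal) ≤ f u}

/-- `p = Prox_{s f}(v)`: `p` is the (unique) minimizer of `f(·) + (1/(2s))‖· − v‖²`. -/
def IsProx (f : X → EReal) (s : ℝ) (v p : X) : Prop :=
  ∀ u : X, f p + ((1 / (2 * s) * ‖p - v‖ ^ 2 : ℝ) : EReal)
    ≤ f u + ((1 / (2 * s) * ‖u - v‖ ^ 2 : ℝ) : EReal)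

/-- The Fenchel–Legendre conjugate `f*(φ) = sup_u (⟪φ, u⟫ − f(u))`. -/
def fenchel (f : X → EReal) (φ : X) : EReal := ⨆ u : X, (((⟪φ, u⟫ : ℝ) : EReal) - f u)

/-- The domain of the Fenchel conjugate. -/
def fdom (f : X → EReal) : Set X := {φ | fenchel f φ ≠ ⊤}

/-- `a = Proj_S(v)`: `a` is the (unique, for `S` closed convex nonempty) Euclidean
projection of `v` onto `S`. -/
def IsProj (S : Set X) (v a : X) : Prop := a ∈ S ∧ ∀ u ∈ S, ‖a - v‖ ≤ ‖u - v‖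

/-- `(xs, ys)` is a saddle point of the Lagrangian. -/
def IsSaddle (f : X → EReal) (A : X →L[ℝ] Y) (b : Y) (xs : X) (ys : Y) : Prop :=
  ∀ (x' : X) (y' : Y), Lag f A b xs y' ≤ Lag f A b xs ys ∧ Lag f A b xs ys ≤ Lag f A b x' ys

/-- The set of saddle points `Z⋆`. -/
def saddleSet (f : X → EReal) (A : X →L[ℝ] Y) (b : Y) : Set (X × Y) :=
  {zs | IsSaddle f A b zs.1 zs.2}

/-- Euclidean distance from a point of `X × Y` to a set. -/
def distZ (z : X × Y) (S : Set (X × Y)) : ℝ :=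
  ⨅ w : S, Real.sqrt (‖z.1 - (w : X × Y).1‖ ^ 2 + ‖z.2 - (w : X × Y).2‖ ^ 2)

/-- The projected duality gap `D(z)`, where `fx = f(x)` and `fa = f*(a)` (both finite). -/
def PDG (fx fa : ℝ) (A : X →L[ℝ] Y) (At : Y →L[ℝ] X) (b : Y) (a x : X) (y : Y) : ℝ :=
  |fx + fa + ⟪b, y⟫| ^ 2 + ‖a + At y‖ ^ 2 + ‖A x - b‖ ^ 2

lemma saddle_props (f : X → EReal) (A : X →L[ℝ] Y) (b : Y)
    (hbot : ∀ u, f u ≠ ⊥) (u : X) (hu : f u ≠ ⊤)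
    (xs : X) (ys : Y) (hs : IsSaddle f A b xs ys) :
    f xs ≠ ⊤ ∧ A xs = b := by
  have h2 := (hs u ys).2
  have hutop : Lag f A b u ys ≠ ⊤ := by
    unfold Lag
    rw [← EReal.coe_toReal hu (hbot u), ← EReal.coe_add]
    exact EReal.coe_ne_top _
  have hLtop : Lag f A b xs ys ≠ ⊤ := by
    intro h; rw [h] at h2; exact hutop (top_le_iff.mp h2)
  have hfs_top : f xs ≠ ⊤ := by
    intro h
    apply hLtop
    unfold Lag; rw [h]; exact EReal.top_add_coe _
  refine ⟨hfs_top, ?_⟩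
  have hFs : f xs = ((f xs).toReal : EReal) := (EReal.coe_toReal hfs_top (hbot xs)).symm
  have key : ∀ y' : Y, ⟪A xs - b, y'⟫ ≤ ⟪A xs - b, ys⟫ := by
    intro y'
    have h1 := (hs xs y').1
    unfold Lag at h1
    rw [hFs] at h1
    have h1' : (f xs).toReal + ⟪A xs - b, y'⟫ ≤ (f xs).toReal + ⟪A xs - b, ys⟫ := by
      exact_mod_cast h1
    linarith
  have h3 := key (ys + (A xs - b))
  rw [inner_add_right, real_inner_self_eq_norm_sq] at h3
  have : ‖A xs - b‖ = 0 := by nlinarith [norm_nonneg (A xs - b)]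
  have : A xs - b = 0 := by rwa [norm_eq_zero] at this
  exact sub_eq_zero.mp this

lemma param_bound {V g β D C : ℝ} (hg : 0 ≤ g) (hD : 0 ≤ D) (hβ : 0 < β)
    (h : ∀ t : ℝ, 0 < t → t ≤ 1 → V ≤ g / t + β * t * D ^ 2 / 2 + C) :
    V ≤ g + Real.sqrt (2 * β * g) * D + C := by
  have hsq : Real.sqrt (2 * β * g) = 2 * Real.sqrt (β / 2) * Real.sqrt g := by
    rw [show (2 * β * g) = (β/2) * g * 4 by ring, Real.sqrt_mul (by positivity),
      Real.sqrt_mul (by positivity), show (4:ℝ) = 2^2 by norm_num, Real.sqrt_sq (by norm_num)]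
    ring
  rcases eq_or_lt_of_le hg with hg0 | hgpos
  · have hg0' := hg0.symm; subst hg0'
    simp only [Real.sqrt_zero, mul_zero, zero_mul, zero_add]
    apply le_of_forall_pos_le_add
    intro ε hε
    have hpos : (0:ℝ) < β * D ^ 2 / 2 + 1 := by positivity
    have ht0 : 0 < min 1 (ε / (β * D ^ 2 / 2 + 1)) := by positivity
    have h1 := h _ ht0 (min_le_left _ _)
    have hm := min_le_right 1 (ε / (β * D ^ 2 / 2 + 1))
    have key : (β * D ^ 2 / 2) * (ε / (β * D ^ 2 / 2 + 1)) ≤ ε := by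
      rw [mul_comm, div_mul_eq_mul_div, div_le_iff₀ hpos]; nlinarith
    have h2 : β * min 1 (ε / (β * D ^ 2 / 2 + 1)) * D ^ 2 / 2 ≤ ε := by
      nlinarith [sq_nonneg D]
    simp only [zero_div, zero_add] at h1
    linarith
  · by_cases hD0 : D = 0
    · have h1 := h 1 one_pos le_rfl
      rw [hD0] at h1 ⊢
      simp only [mul_zero, zero_pow, ne_eq, OfNat.ofNat_ne_zero, not_false_iff,
        zero_div, add_zero, div_one] at h1 ⊢
      nlinarith [Real.sqrt_nonneg (2*β*g)]
    · have hDpos : 0 < D := lt_of_le_of_ne hD (Ne.symm hD0)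
      set s : ℝ := Real.sqrt (β / 2) * D with hs
      have hspos : 0 < s := by positivity
      have hrg : 0 < Real.sqrt g := Real.sqrt_pos.mpr hgpos
      set t : ℝ := Real.sqrt g / (Real.sqrt g + s) with ht
      have ht0 : 0 < t := by positivity
      have ht1 : t ≤ 1 := by
        rw [ht, div_le_one (by positivity)]; linarith
      have h1 := h t ht0 ht1
      have hgt : g / t = g + Real.sqrt g * s := by
        rw [ht, div_div_eq_mul_div, div_eq_iff (by positivity)]
        nlinarith [Real.sq_sqrt hg]
      have hs2 : s ^ 2 = β / 2 * D ^ 2 := by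
        rw [hs, mul_pow, Real.sq_sqrt (by positivity)]
      have hbt : β * t * D ^ 2 / 2 ≤ Real.sqrt g * s := by
        have he : β * t * D ^ 2 / 2 = s ^ 2 * t := by rw [hs2]; ring
        rw [he, ht, mul_div_assoc', div_le_iff₀ (by positivity)]
        nlinarith [mul_pos (mul_pos hrg hspos) hrg]
      rw [hsq]
      have he2 : 2 * Real.sqrt (β/2) * Real.sqrt g * D = 2 * (Real.sqrt g * s) := by
        rw [hs]; ring
      linarith

set_option maxHeartbeats 1000000 in
/-- optimality-gap bound from the smoothed gap under a quadratic error
bound. Assume the saddle-point set is nonempty (witnessed by `(xs, ys)`) and the smoothed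
gap has a quadratic error bound with constant `η > 0`.  Then for every `z = (x, y)` with
`f(x) < +∞`, `f(x) − f⋆ ≤ (1 + 2√(βx/η)) G_β(z) + √(2βy) ‖y‖ √(G_β(z))`
(the value `g` of the self-centered smoothed gap, finite under the standing assumptions,
is given by `hg`). -/
theorem optimality_gap_le_smoothedGap
    [FiniteDimensional ℝ X] [FiniteDimensional ℝ Y]
    (f : X → EReal) (A : X →L[ℝ] Y) (b : Y)
    (hf_proper : EProper f) (hf_lsc : LowerSemicontinuous f) (hf_conv : EConvexOn f)
    (βx βy : ℝ) (hβx : 0 < βx) (hβy : 0 < βy)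
    (xs : X) (ys : Y) (hsaddle : IsSaddle f A b xs ys)
    (η : ℝ) (hη : 0 < η)
    (hQEB : ∀ z' : X × Y,
      ((η / 2 * (distZ z' (saddleSet f A b)) ^ 2 : ℝ) : EReal)
        ≤ smoothedGap f A b βx βy z'.1 z'.2 z'.1 z'.2)
    (x : X) (y : Y) (hfx : f x < ⊤)
    (g : ℝ) (hg : smoothedGap f A b βx βy x y x y = (g : EReal)) :
    f x - f xs
      ≤ (((1 + 2 * Real.sqrt (βx / η)) * g
          + Real.sqrt (2 * βy) * ‖y‖ * Real.sqrt g : ℝ) : EReal) := by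
  obtain ⟨hbot, u, hu⟩ := hf_proper
  obtain ⟨hfs_top, hAxs⟩ := saddle_props f A b hbot u hu xs ys hsaddle
  set F : ℝ := (f x).toReal with hFdef
  have hF : f x = (F : EReal) := (EReal.coe_toReal hfx.ne (hbot x)).symm
  set Fs : ℝ := (f xs).toReal with hFsdef
  have hFs : f xs = (Fs : EReal) := (EReal.coe_toReal hfs_top (hbot xs)).symm
  have hsup : ∀ w : X × Y,
      Lag f A b x w.2 - Lag f A b w.1 y
        - ((βx / 2 * ‖w.1 - x‖ ^ 2 + βy / 2 * ‖w.2 - y‖ ^ 2 : ℝ) : EReal) ≤ (g : EReal) := by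
    intro w
    rw [← hg]
    exact le_iSup (fun w : X × Y => Lag f A b x w.2 - Lag f A b w.1 y
      - ((βx / 2 * ‖w.1 - x‖ ^ 2 + βy / 2 * ‖w.2 - y‖ ^ 2 : ℝ) : EReal)) w
  have hreal : ∀ (x' : X) (y' : Y) (p : ℝ), f x' = (p : EReal) →
      F + ⟪A x - b, y'⟫ - (p + ⟪A x' - b, y⟫)
        - (βx / 2 * ‖x' - x‖ ^ 2 + βy / 2 * ‖y' - y‖ ^ 2) ≤ g := by
    intro x' y' p hp
    have h := hsup (x', y')
    unfold Lag at h
    rw [hF, hp] at h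
    exact_mod_cast h
  have hg0 : 0 ≤ g := by
    have h := hreal x y F hF
    norm_num [sub_self] at h
    linarith
  set r : ℝ := ‖A x - b‖ with hrdef
  have hr0 : 0 ≤ r := norm_nonneg _
  have hrg : r ≤ Real.sqrt (2 * βy * g) := by
    have h := hreal x (y + βy⁻¹ • (A x - b)) F hF
    rw [inner_add_right, real_inner_smul_right, real_inner_self_eq_norm_sq,
      add_sub_cancel_left, norm_smul, sub_self, norm_zero, Real.norm_eq_abs,
      abs_of_pos (by positivity : (0:ℝ) < βy⁻¹)] at h
    rw [← hrdef] at h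
    rw [Real.le_sqrt hr0 (by positivity)]
    have e1 : βy / 2 * (βy⁻¹ * r) ^ 2 = r ^ 2 * βy⁻¹ / 2 := by
      field_simp
    have e2 : r ^ 2 * βy⁻¹ / 2 ≤ g := by nlinarith [h, e1]
    clear h
    have e3 : r ^ 2 * (βy⁻¹ * βy) = r ^ 2 := by
      rw [inv_mul_cancel₀ (ne_of_gt hβy), mul_one]
    nlinarith [mul_le_mul_of_nonneg_right e2 (by positivity : (0:ℝ) ≤ 2 * βy), e3]
  have hCS : |⟪A x - b, y⟫| ≤ r * ‖y‖ := abs_real_inner_le_norm _ _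
  have main1 : ∀ w : X × Y, IsSaddle f A b w.1 w.2 →
      F - Fs ≤ g + Real.sqrt (2 * βx * g) * ‖w.1 - x‖ + Real.sqrt (2 * βy * g) * ‖y‖ := by
    intro w hw
    obtain ⟨hw_top, hwA⟩ := saddle_props f A b hbot u hu w.1 w.2 hw
    set Fw : ℝ := (f w.1).toReal with hFwdef
    have hFw : f w.1 = (Fw : EReal) := (EReal.coe_toReal hw_top (hbot w.1)).symm
    have hLxs : ∀ y' : Y, Lag f A b xs y' = (Fs : EReal) := by
      intro y'; unfold Lag; rw [hFs, hAxs, sub_self, inner_zero_left]; norm_num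
    have hLw : ∀ y' : Y, Lag f A b w.1 y' = (Fw : EReal) := by
      intro y'; unfold Lag; rw [hFw, hwA, sub_self, inner_zero_left]; norm_num
    have hFwFs : Fw = Fs := by
      have h1 := (hw xs w.2).2
      have h2 := (hsaddle w.1 ys).2
      rw [hLxs, hLw] at h1
      rw [hLxs, hLw] at h2
      exact le_antisymm (by exact_mod_cast h1) (by exact_mod_cast h2)
    set D : ℝ := ‖w.1 - x‖ with hDdef
    have hD0 : 0 ≤ D := norm_nonneg _
    have hparam : ∀ t : ℝ, 0 < t → t ≤ 1 →
        F - Fs ≤ g / t + βx * t * D ^ 2 / 2 + Real.sqrt (2 * βy * g) * ‖y‖ := by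
      intro t ht0 ht1
      set x' : X := t • w.1 + (1 - t) • x with hx'
      have hcv := hf_conv w.1 x t ht0.le ht1
      rw [hFw, hF] at hcv
      have hcv' : f x' ≤ ((t * Fw + (1 - t) * F : ℝ) : EReal) := by
        rw [hx']; exact_mod_cast hcv
      have hx'top : f x' ≠ ⊤ := fun hc => by
        rw [hc] at hcv'; exact (EReal.coe_ne_top _) (top_le_iff.mp hcv')
      set p : ℝ := (f x').toReal with hpdef
      have hp : f x' = (p : EReal) := (EReal.coe_toReal hx'top (hbot x')).symm
      have hple : p ≤ t * Fw + (1 - t) * F := by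
        rw [hp] at hcv'; exact_mod_cast hcv'
      have hAx' : A x' - b = (1 - t) • (A x - b) := by
        rw [hx', map_add, map_smul, map_smul, hwA]; module
      have hxx : x' - x = t • (w.1 - x) := by rw [hx']; module
      have h := hreal x' (y + βy⁻¹ • (A x - b)) p hp
      rw [inner_add_right, real_inner_smul_right, real_inner_self_eq_norm_sq,
        hAx', real_inner_smul_left, add_sub_cancel_left, hxx, norm_smul, norm_smul,
        Real.norm_eq_abs, Real.norm_eq_abs, abs_of_pos ht0,
        abs_of_pos (by positivity : (0:ℝ) < βy⁻¹)] at h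
      rw [← hrdef] at h
      have e1 : βy / 2 * (βy⁻¹ * r) ^ 2 = r ^ 2 * βy⁻¹ / 2 := by
        field_simp
      have e4 : (0:ℝ) ≤ r ^ 2 * βy⁻¹ / 2 := by positivity
      have hc1 : -(r * ‖y‖) ≤ ⟪A x - b, y⟫ := neg_le_of_abs_le hCS
      have hb2 : t * (r * ‖y‖) ≤ t * (Real.sqrt (2 * βy * g) * ‖y‖) :=
        mul_le_mul_of_nonneg_left (mul_le_mul_of_nonneg_right hrg (norm_nonneg y)) ht0.le
      have h6 := mul_le_mul_of_nonneg_left hc1 ht0.le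
      rw [hFwFs] at hple
      have hmul : t * (F - Fs) ≤ g + βx * t ^ 2 * D ^ 2 / 2
          + t * (Real.sqrt (2 * βy * g) * ‖y‖) := by
        nlinarith [h, hple, e1, e4, hb2, h6]
      rw [← mul_le_mul_iff_right₀ ht0]
      have hrhs : t * (g / t + βx * t * D ^ 2 / 2 + Real.sqrt (2 * βy * g) * ‖y‖)
          = g + βx * t ^ 2 * D ^ 2 / 2 + t * (Real.sqrt (2 * βy * g) * ‖y‖) := by
        have ht' : t ≠ 0 := ne_of_gt ht0
        field_simp
      rw [hrhs]
      exact hmul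
    exact param_bound hg0 hD0 hβx hparam
  haveI hSne : Nonempty (saddleSet f A b) := ⟨⟨(xs, ys), hsaddle⟩⟩
  have hq0 : ((η / 2 * (distZ ((x, y) : X × Y) (saddleSet f A b)) ^ 2 : ℝ) : EReal)
      ≤ smoothedGap f A b βx βy x y x y := hQEB (x, y)
  rw [hg] at hq0
  have hd0' : 0 ≤ distZ ((x, y) : X × Y) (saddleSet f A b) :=
    Real.iInf_nonneg fun _ => Real.sqrt_nonneg _
  set d : ℝ := distZ ((x, y) : X × Y) (saddleSet f A b) with hd
  have hq1 : η / 2 * d ^ 2 ≤ g := by exact_mod_cast hq0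
  have hd0 : 0 ≤ d := hd0'
  have hdg : d ≤ Real.sqrt (2 * g / η) := by
    rw [Real.le_sqrt hd0 (by positivity)]
    rw [le_div_iff₀ hη]
    linarith
  have main2 : F - Fs ≤ g + Real.sqrt (2 * βx * g) * d + Real.sqrt (2 * βy * g) * ‖y‖ := by
    apply le_of_forall_pos_le_add
    intro ε hε
    set ε' : ℝ := ε / (Real.sqrt (2 * βx * g) + 1) with hε'
    have hε'pos : 0 < ε' := by positivity
    have hlt : distZ ((x, y) : X × Y) (saddleSet f A b) < d + ε' := by
      rw [← hd]; linarith
    obtain ⟨w, hw0⟩ := exists_lt_of_ciInf_lt hlt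
    have hw : Real.sqrt (‖x - (w : X × Y).1‖ ^ 2 + ‖y - (w : X × Y).2‖ ^ 2) < d + ε' := hw0
    have hDle : ‖(w : X × Y).1 - x‖ ≤ d + ε' := by
      rw [norm_sub_rev]
      calc ‖x - (w : X × Y).1‖ = Real.sqrt (‖x - (w : X × Y).1‖ ^ 2) :=
            (Real.sqrt_sq (norm_nonneg _)).symm
        _ ≤ Real.sqrt (‖x - (w : X × Y).1‖ ^ 2 + ‖y - (w : X × Y).2‖ ^ 2) :=
            Real.sqrt_le_sqrt (le_add_of_nonneg_right (by positivity))
        _ ≤ d + ε' := hw.le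
    have h3 := main1 (w : X × Y) w.2
    have h4 : Real.sqrt (2 * βx * g) * ‖(w : X × Y).1 - x‖
        ≤ Real.sqrt (2 * βx * g) * (d + ε') :=
      mul_le_mul_of_nonneg_left hDle (Real.sqrt_nonneg _)
    have h5 : Real.sqrt (2 * βx * g) * ε' ≤ ε := by
      rw [hε', mul_comm, div_mul_eq_mul_div, div_le_iff₀
        (by positivity : (0:ℝ) < Real.sqrt (2 * βx * g) + 1)]
      nlinarith [Real.sqrt_nonneg (2 * βx * g)]
    have hexp : Real.sqrt (2 * βx * g) * (d + ε')
        = Real.sqrt (2 * βx * g) * d + Real.sqrt (2 * βx * g) * ε' := by ring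
    linarith [h3, h4, h5]
  have hprod : Real.sqrt (2 * βx * g) * Real.sqrt (2 * g / η) = 2 * g * Real.sqrt (βx / η) := by
    rw [← Real.sqrt_mul (by positivity),
      show (2 * βx * g) * (2 * g / η) = (βx / η) * (2 * g) ^ 2 by field_simp,
      Real.sqrt_mul (by positivity), Real.sqrt_sq (by positivity)]
    ring
  have hsplit : Real.sqrt (2 * βy * g) = Real.sqrt (2 * βy) * Real.sqrt g :=
    Real.sqrt_mul (by positivity) g
  have hb : Real.sqrt (2 * βx * g) * d ≤ 2 * g * Real.sqrt (βx / η) := by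
    rw [← hprod]
    exact mul_le_mul_of_nonneg_left hdg (Real.sqrt_nonneg _)
  have hfinal : F - Fs ≤ (1 + 2 * Real.sqrt (βx / η)) * g
      + Real.sqrt (2 * βy) * ‖y‖ * Real.sqrt g := by
    rw [hsplit] at main2
    nlinarith [main2, hb]
  rw [hF, hFs, ← EReal.coe_sub]
  exact_mod_cast hfinal
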